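/- Generation lemma for applications: for any context Γ, terms t, u, and type T, if Γ ⊢ t u : T is derivable in Add, then there exist integers n, m ≥ 1, types T₁,…,Tₙ, a unit type U, type variables X⃗ and vectors of unit types V⃗₁,…,V⃗ₘ such that Γ ⊢ t : Σ_{i=1}^{n} ∀X⃗.(U→T_i) and Γ ⊢ u : Σ_{j=1}^{m} U[V⃗_j/X⃗] are derivable in Add, and Σ_{i=1}^{n}Σ_{j=1}^{m} T_i[V⃗_j/X⃗] ≼ T. -/

import Mathlib

set_option maxHeartbeats 1000000

/-! ## Terms of the non-deterministic call-by-value λ-calculus (de Bruijn indices) -/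

inductive Tm : Type
  | var : ℕ → Tm
  | lam : Tm → Tm
  | app : Tm → Tm → Tm
  | add : Tm → Tm → Tm
  | zero : Tm
  deriving DecidableEq

namespace Tm

/-- Values: variables and abstractions. -/
inductive IsValue : Tm → Prop
  | var (n : ℕ) : IsValue (var n)
  | lam (t : Tm) : IsValue (lam t)

/-- de Bruijn shifting: add `d` to every variable index `≥ c`. -/
def shift (d c : ℕ) : Tm → Tm
  | var n => if n < c then var n else var (n + d)
  | lam t => lam (shift d (c + 1) t)
  | app t u => app (shift d c t) (shift d c u)
  | add t u => add (shift d c t) (shift d c u)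
  | zero => zero

/-- Capture-avoiding substitution of the variable `k` by `v` (removing the binder). -/
def subst (k : ℕ) (v : Tm) : Tm → Tm
  | var n => if n = k then shift k 0 v else if k < n then var (n - 1) else var n
  | lam t => lam (subst (k + 1) v t)
  | app t u => app (subst k v t) (subst k v u)
  | add t u => add (subst k v t) (subst k v u)
  | zero => zero

/-- `ClosedUnder k t`: every free variable of `t` has index `< k`. -/
def ClosedUnder (k : ℕ) : Tm → Prop
  | var n => n < k
  | lam t => ClosedUnder (k + 1) t
  | app t u => ClosedUnder k t ∧ ClosedUnder k u
  | add t u => ClosedUnder k t ∧ ClosedUnder k u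
  | zero => True

/-- Closed terms. -/
def Closed (t : Tm) : Prop := ClosedUnder 0 t

end Tm

open Tm

/-- The AC-equivalence on terms: the least congruence making `+`
associative and commutative (terms are considered modulo `Aeq`). -/
inductive Aeq : Tm → Tm → Prop
  | refl (t : Tm) : Aeq t t
  | symm : Aeq t u → Aeq u t
  | trans : Aeq t u → Aeq u s → Aeq t s
  | comm (t u : Tm) : Aeq (.add t u) (.add u t)
  | assoc (t u s : Tm) : Aeq (.add t (.add u s)) (.add (.add t u) s)
  | lamCongr : Aeq t t' → Aeq (.lam t) (.lam t')
  | appCongr : Aeq t t' → Aeq u u' → Aeq (.app t u) (.app t' u')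
  | addCongr : Aeq t t' → Aeq u u' → Aeq (.add t u) (.add t' u')

/-- One-step reduction (the five rewrite rules plus β, closed under all
contexts, and performed modulo the AC-equivalence of terms). -/
inductive Step : Tm → Tm → Prop
  | distrRight (t u s : Tm) : Step (.app (.add t u) s) (.add (.app t s) (.app u s))
  | distrLeft (t u s : Tm) : Step (.app t (.add u s)) (.add (.app t u) (.app t s))
  | zeroApp (t : Tm) : Step (.app .zero t) .zero
  | appZero (t : Tm) : Step (.app t .zero) .zero
  | addZero (t : Tm) : Step (.add t .zero) t
  | beta (t v : Tm) : IsValue v → Step (.app (.lam t) v) (Tm.subst 0 v t)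
  | appLeft : Step t t' → Step (.app t u) (.app t' u)
  | appRight : Step u u' → Step (.app t u) (.app t u')
  | addLeft : Step t t' → Step (.add t u) (.add t' u)
  | addRight : Step u u' → Step (.add t u) (.add t u')
  | lamCongr : Step t t' → Step (.lam t) (.lam t')
  | ac : Aeq t t' → Step t' u' → Aeq u' u → Step t u

/-- Strong normalisation of a term: accessibility of the inverse reduction. -/
def SN (t : Tm) : Prop := Acc (fun a b => Step b a) t

/-- The set of strongly normalising closed terms. -/
def SNset : Set Tm := {t | Closed t ∧ SN t}

/-- Pseudo-values: abstractions and sums of pseudo-values. -/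
inductive PseudoValue : Tm → Prop
  | lam (t : Tm) : PseudoValue (.lam t)
  | add : PseudoValue t → PseudoValue u → PseudoValue (.add t u)

/-- Neutral terms: closed terms that are not pseudo-values. -/
def Neutral (t : Tm) : Prop := Closed t ∧ ¬ PseudoValue t

/-- The set of one-step reducts of `t`. -/
def Red (t : Tm) : Set Tm := {u | Step t u}

/-- The set of reducts (in any number of steps, including zero) of terms of `S`. -/
def RedStar (S : Set Tm) : Set Tm := {u | ∃ t ∈ S, Relation.ReflTransGen Step t u}

/-- The closure of a set of terms under (CR3). -/
inductive Clo (S : Set Tm) : Tm → Prop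
  | base {t : Tm} : t ∈ S → Clo S t
  | step {t : Tm} : Neutral t → (∀ u, Step t u → Clo S u) → Clo S t

/-- `clo S`: the least set containing `S` and closed under (CR3). -/
def clo (S : Set Tm) : Set Tm := {t | Clo S t}

/-- Reducibility candidates. -/
structure IsCandidate (A : Set Tm) : Prop where
  cr1 : A ⊆ SNset
  cr2 : ∀ t ∈ A, Red t ⊆ A
  cr3 : ∀ t, Neutral t → Red t ⊆ A → t ∈ A

/-- The arrow operator on sets of closed terms. -/
def CArrow (A B : Set Tm) : Set Tm := {t | Closed t ∧ ∀ u ∈ A, Tm.app t u ∈ B}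

/-- The sum of two sets of (AC-classes of) terms. -/
def CSum (A B : Set Tm) : Set Tm := {s | ∃ t ∈ A, ∃ u ∈ B, Aeq s (Tm.add t u)}

/-- The ⊞ operator on reducibility candidates. -/
def CPlus (A B : Set Tm) : Set Tm := clo (CSum A B ∪ A ∪ B)

/-! ## Types of the Add type system -/

mutual
  /-- Unit types. -/
  inductive UTy : Type
    | var : ℕ → UTy
    | arrow : UTy → Ty → UTy
    | all : UTy → UTy

  /-- Types. -/
  inductive Ty : Type
    | unit : UTy → Ty
    | add : Ty → Ty → Ty
    | zero : Ty
end

mutual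
  /-- Shifting of type variables in unit types. -/
  def UTy.shift (d c : ℕ) : UTy → UTy
    | .var n => if n < c then .var n else .var (n + d)
    | .arrow U T => .arrow (UTy.shift d c U) (Ty.shift d c T)
    | .all U => .all (UTy.shift d (c + 1) U)

  /-- Shifting of type variables in types. -/
  def Ty.shift (d c : ℕ) : Ty → Ty
    | .unit U => .unit (UTy.shift d c U)
    | .add T R => .add (Ty.shift d c T) (Ty.shift d c R)
    | .zero => .zero
end

mutual
  /-- Substitution of the (bound) type variable `k` by `V` in a unit type. -/
  def UTy.subst (k : ℕ) (V : UTy) : UTy → UTy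
    | .var n => if n = k then UTy.shift k 0 V else if k < n then .var (n - 1) else .var n
    | .arrow U T => .arrow (UTy.subst k V U) (Ty.subst k V T)
    | .all U => .all (UTy.subst (k + 1) V U)

  /-- Substitution of the (bound) type variable `k` by `V` in a type. -/
  def Ty.subst (k : ℕ) (V : UTy) : Ty → Ty
    | .unit U => .unit (UTy.subst k V U)
    | .add T R => .add (Ty.subst k V T) (Ty.subst k V R)
    | .zero => .zero
end

/-- Iterated substitution `U[V⃗/X⃗]` for a unit type under `|Vs|` quantifiers. -/
def UTy.msubst (Vs : List UTy) (U : UTy) : UTy := Vs.foldl (fun A V => UTy.subst 0 V A) U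

/-- Iterated substitution `T[V⃗/X⃗]` for a type under `|Vs|` quantifiers. -/
def Ty.msubst (Vs : List UTy) (T : Ty) : Ty := Vs.foldl (fun A V => Ty.subst 0 V A) T

mutual
  /-- Substitution of the free type variable `X` (seen at depth `c`) by `V` in a unit type. -/
  def UTy.replAux (X : ℕ) (V : UTy) (c : ℕ) : UTy → UTy
    | .var n => if n = X + c then UTy.shift c 0 V else .var n
    | .arrow U T => .arrow (UTy.replAux X V c U) (Ty.replAux X V c T)
    | .all U => .all (UTy.replAux X V (c + 1) U)

  /-- Substitution of the free type variable `X` (seen at depth `c`) by `V` in a type. -/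
  def Ty.replAux (X : ℕ) (V : UTy) (c : ℕ) : Ty → Ty
    | .unit U => .unit (UTy.replAux X V c U)
    | .add T R => .add (Ty.replAux X V c T) (Ty.replAux X V c R)
    | .zero => .zero
end

/-- Capture-avoiding substitution `U[V/X]` of a free type variable. -/
def UTy.repl (X : ℕ) (V : UTy) (U : UTy) : UTy := UTy.replAux X V 0 U

/-- Capture-avoiding substitution `T[V/X]` of a free type variable. -/
def Ty.repl (X : ℕ) (V : UTy) (T : Ty) : Ty := Ty.replAux X V 0 T

mutual
  /-- Abstraction of the free type variable `X` (at depth `c`), used to form `∀X.U`. -/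
  def UTy.absAux (X c : ℕ) : UTy → UTy
    | .var n => if n = X + c then .var c else if c ≤ n then .var (n + 1) else .var n
    | .arrow U T => .arrow (UTy.absAux X c U) (Ty.absAux X c T)
    | .all U => .all (UTy.absAux X (c + 1) U)

  /-- Abstraction of the free type variable `X` (at depth `c`) in a type. -/
  def Ty.absAux (X c : ℕ) : Ty → Ty
    | .unit U => .unit (UTy.absAux X c U)
    | .add T R => .add (Ty.absAux X c T) (Ty.absAux X c R)
    | .zero => .zero
end

/-- `∀X.U`: universal quantification of the free type variable `X` in `U`. -/
def UTy.genAll (X : ℕ) (U : UTy) : UTy := .all (UTy.absAux X 0 U)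

mutual
  /-- `X` occurs free in a unit type. -/
  def UTy.Free (n : ℕ) : UTy → Prop
    | .var m => m = n
    | .arrow U T => UTy.Free n U ∨ Ty.Free n T
    | .all U => UTy.Free (n + 1) U

  /-- `X` occurs free in a type. -/
  def Ty.Free (n : ℕ) : Ty → Prop
    | .unit U => UTy.Free n U
    | .add T R => Ty.Free n T ∨ Ty.Free n R
    | .zero => False
end

mutual
  /-- Equivalence of unit types (the least congruence making `+` on types
  associative, commutative, with neutral element `𝟘`). -/
  inductive UEq : UTy → UTy → Prop
    | refl (U : UTy) : UEq U U
    | symm : UEq U V → UEq V U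
    | trans : UEq U V → UEq V W → UEq U W
    | arrow : UEq U U' → TEq T T' → UEq (.arrow U T) (.arrow U' T')
    | all : UEq U U' → UEq (.all U) (.all U')

  /-- Equivalence of types: the least congruence such that
  `T+R ≡ R+T`, `T+(R+S) ≡ (T+R)+S` and `T+𝟘 ≡ T`. -/
  inductive TEq : Ty → Ty → Prop
    | refl (T : Ty) : TEq T T
    | symm : TEq T R → TEq R T
    | trans : TEq T R → TEq R S → TEq T S
    | unit : UEq U U' → TEq (.unit U) (.unit U')
    | addCongr : TEq T T' → TEq R R' → TEq (.add T R) (.add T' R')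
    | comm (T R : Ty) : TEq (.add T R) (.add R T)
    | assoc (T R S : Ty) : TEq (.add T (.add R S)) (.add (.add T R) S)
    | zero (T : Ty) : TEq (.add T .zero) T
end

/-- `Σ_{i} T_i`, with the empty sum being `𝟘`. -/
def sumT (Ts : List Ty) : Ty := Ts.foldl Ty.add Ty.zero

/-- `∀X₁.…∀X_k.U`. -/
def allN : ℕ → UTy → UTy
  | 0, U => U
  | k + 1, U => .all (allN k U)

/-- Lifting of type variables in a typing context (for ∀-introduction). -/
def liftCtx (Γ : List UTy) : List UTy := Γ.map (UTy.shift 1 0)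

/-! ## The Add type system -/

/-- Typing judgements of the Add type system. -/
inductive Typing : List UTy → Tm → Ty → Prop
  | ax {Γ : List UTy} {n : ℕ} {U : UTy} : Γ[n]? = some U → Typing Γ (.var n) (.unit U)
  | axZero {Γ : List UTy} : Typing Γ .zero .zero
  | equiv {Γ t T R} : Typing Γ t T → TEq T R → Typing Γ t R
  | arrI {Γ U t T} : Typing (U :: Γ) t T → Typing Γ (.lam t) (.unit (.arrow U T))
  | arrE {Γ t u} {k : ℕ} {U : UTy} {Ts : List Ty} {Vs : List (List UTy)} :
      Ts ≠ [] → Vs ≠ [] → (∀ V ∈ Vs, V.length = k) →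
      Typing Γ t (sumT (Ts.map fun Ti => .unit (allN k (.arrow U Ti)))) →
      Typing Γ u (sumT (Vs.map fun Vj => .unit (UTy.msubst Vj U))) →
      Typing Γ (.app t u)
        (sumT ((Ts.map fun Ti => Vs.map fun Vj => Ty.msubst Vj Ti).flatten))
  | addI {Γ t u T R} : Typing Γ t T → Typing Γ u R → Typing Γ (.add t u) (.add T R)
  | allE {Γ t U} (V : UTy) : Typing Γ t (.unit (.all U)) → Typing Γ t (.unit (UTy.subst 0 V U))
  | allI {Γ t U} : Typing (liftCtx Γ) t (.unit U) → Typing Γ t (.unit (.all U))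

/-! ## Interpretation of types by reducibility candidates -/

/-- Extension of a valuation. -/
def consV (A : Set Tm) (ρ : ℕ → Set Tm) : ℕ → Set Tm
  | 0 => A
  | n + 1 => ρ n

mutual
  /-- Interpretation of unit types. -/
  def interpU : UTy → (ℕ → Set Tm) → Set Tm
    | .var n, ρ => ρ n
    | .arrow U T, ρ => CArrow (interpU U ρ) (interpT T ρ)
    | .all U, ρ => {t | ∀ A : Set Tm, IsCandidate A → t ∈ interpU U (consV A ρ)}

  /-- Interpretation of types. -/
  def interpT : Ty → (ℕ → Set Tm) → Set Tm
    | .unit U, ρ => interpU U ρ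
    | .add T R, ρ => CPlus (interpT T ρ) (interpT R ρ)
    | .zero, _ => clo ∅
end

/-- Lifting of a simultaneous substitution under a binder. -/
def liftSub (σ : ℕ → Tm) : ℕ → Tm
  | 0 => .var 0
  | n + 1 => Tm.shift 1 0 (σ n)

/-- Simultaneous substitution `t_σ` of all free term variables of `t`. -/
def Tm.msubst (σ : ℕ → Tm) : Tm → Tm
  | .var n => σ n
  | .lam t => .lam (Tm.msubst (liftSub σ) t)
  | .app t u => .app (Tm.msubst σ t) (Tm.msubst σ u)
  | .add t u => .add (Tm.msubst σ t) (Tm.msubst σ u)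
  | .zero => .zero

/-! ## The relations ⋖ and ≼ on types -/

/-- The relation `⋖` on unit types: `U₁ ⋖ U₂` iff either `U₂ ≡ ∀X.U₁`, or
`U₁ ≡ ∀X.U'` and `U₂ ≡ U'[V/X]`. -/
inductive SSub : UTy → UTy → Prop
  | gen {U₁ U₂ : UTy} (X : ℕ) : UEq U₂ (UTy.genAll X U₁) → SSub U₁ U₂
  | inst {U₁ U₂ : UTy} (U' V : UTy) : UEq U₁ (.all U') → UEq U₂ (UTy.subst 0 V U') →
      SSub U₁ U₂

/-- The relation `≼`: the reflexive (with respect to `≡`) and transitive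
closure of `⋖`, on types. -/
inductive TPre : Ty → Ty → Prop
  | ofEq : TEq T T' → TPre T T'
  | ofSSub {U V : UTy} : SSub U V → TPre (.unit U) (.unit V)
  | trans : TPre T T' → TPre T' T'' → TPre T T''

/-! ## Trees and the structured type system Add_struct -/

/-- Binary trees with two kinds of leaves: `ℓ`-leaves and `𝟘`-leaves. -/
inductive ATree : Type
  | leaf : ATree
  | zleaf : ATree
  | node : ATree → ATree → ATree
  deriving DecidableEq

namespace ATree

/-- ATree composition: branch a copy of `A'` at each `ℓ`-leaf of `A`. -/
def comp : ATree → ATree → ATree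
  | .leaf, A' => A'
  | .zleaf, _ => .zleaf
  | .node A B, A' => .node (comp A A') (comp B A')

/-- `LeafAt A w`: the word `w` (over `{l,r}`, here `{false,true}`) is the
address of an `ℓ`-leaf of `A`. -/
inductive LeafAt : ATree → List Bool → Prop
  | leaf : LeafAt .leaf []
  | left {A B w} : LeafAt A w → LeafAt (.node A B) (false :: w)
  | right {A B w} : LeafAt B w → LeafAt (.node A B) (true :: w)

/-- Labelling of the `ℓ`-leaves of a tree by unit types, yielding a type. -/
def labelU : ATree → (List Bool → UTy) → Ty
  | .leaf, f => .unit (f [])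
  | .zleaf, _ => .zero
  | .node A B, f => .add (labelU A fun w => f (false :: w)) (labelU B fun w => f (true :: w))

/-- Labelling of the `ℓ`-leaves of a tree by types, yielding a type. -/
def labelT : ATree → (List Bool → Ty) → Ty
  | .leaf, f => f []
  | .zleaf, _ => .zero
  | .node A B, f => .add (labelT A fun w => f (false :: w)) (labelT B fun w => f (true :: w))

/-- Split an address of a leaf of `A ∘ A'` into the `A`-part and the `A'`-part. -/
def split : ATree → List Bool → List Bool × List Bool
  | .leaf, p => ([], p)
  | .zleaf, p => ([], p)
  | .node A _, false :: p => ((split A p).1.cons false, (split A p).2)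
  | .node _ B, true :: p => ((split B p).1.cons true, (split B p).2)
  | .node _ _, [] => ([], [])

end ATree

/-- Typing derivations of the structured type system Add_struct. -/
inductive SDeriv : List UTy → Tm → Ty → Type
  | ax (Γ : List UTy) (n : ℕ) (U : UTy) (h : Γ[n]? = some U) : SDeriv Γ (.var n) (.unit U)
  | axZero (Γ : List UTy) : SDeriv Γ .zero .zero
  | arrI {Γ U t T} (D : SDeriv (U :: Γ) t T) : SDeriv Γ (.lam t) (.unit (.arrow U T))
  | addI {Γ t u T R} (D₁ : SDeriv Γ t T) (D₂ : SDeriv Γ u R) :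
      SDeriv Γ (.add t u) (.add T R)
  | allE {Γ t U} (V : UTy) (D : SDeriv Γ t (.unit (.all U))) :
      SDeriv Γ t (.unit (UTy.subst 0 V U))
  | allI {Γ t U} (D : SDeriv (liftCtx Γ) t (.unit U)) : SDeriv Γ t (.unit (.all U))
  | arrE {Γ t u} (A A' : ATree) (k : ℕ) (U : UTy) (Tf : List Bool → Ty)
      (Vf : List Bool → List UTy)
      (hlen : ∀ v, A'.LeafAt v → (Vf v).length = k)
      (D₁ : SDeriv Γ t (A.labelU fun w => allN k (.arrow U (Tf w))))
      (D₂ : SDeriv Γ u (A'.labelU fun v => UTy.msubst (Vf v) U)) :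
      SDeriv Γ (.app t u)
        ((A.comp A').labelT fun p => Ty.msubst (Vf (A.split p).2) (Tf (A.split p).1))

/-! ## System F with pairs -/

/-- Terms of System F with pairs. -/
inductive FTm : Type
  | var : ℕ → FTm
  | lam : FTm → FTm
  | app : FTm → FTm → FTm
  | star : FTm
  | pair : FTm → FTm → FTm
  | pl : FTm → FTm
  | pr : FTm → FTm
  deriving DecidableEq

/-- Types of System F with pairs. -/
inductive FTy : Type
  | var : ℕ → FTy
  | arrow : FTy → FTy → FTy
  | all : FTy → FTy
  | one : FTy
  | prod : FTy → FTy → FTy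
  deriving DecidableEq

/-- Shifting of term variables in F-terms. -/
def FTm.shift (d c : ℕ) : FTm → FTm
  | .var n => if n < c then .var n else .var (n + d)
  | .lam t => .lam (FTm.shift d (c + 1) t)
  | .app t u => .app (FTm.shift d c t) (FTm.shift d c u)
  | .star => .star
  | .pair t u => .pair (FTm.shift d c t) (FTm.shift d c u)
  | .pl t => .pl (FTm.shift d c t)
  | .pr t => .pr (FTm.shift d c t)

/-- Substitution of the term variable `k` by `v` in an F-term. -/
def FTm.subst (k : ℕ) (v : FTm) : FTm → FTm
  | .var n => if n = k then FTm.shift k 0 v else if k < n then .var (n - 1) else .var n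
  | .lam t => .lam (FTm.subst (k + 1) v t)
  | .app t u => .app (FTm.subst k v t) (FTm.subst k v u)
  | .star => .star
  | .pair t u => .pair (FTm.subst k v t) (FTm.subst k v u)
  | .pl t => .pl (FTm.subst k v t)
  | .pr t => .pr (FTm.subst k v t)

/-- Shifting of type variables in F-types. -/
def FTy.shift (d c : ℕ) : FTy → FTy
  | .var n => if n < c then .var n else .var (n + d)
  | .arrow A B => .arrow (FTy.shift d c A) (FTy.shift d c B)
  | .all A => .all (FTy.shift d (c + 1) A)
  | .one => .one
  | .prod A B => .prod (FTy.shift d c A) (FTy.shift d c B)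

/-- Substitution of the type variable `k` by `B` in an F-type. -/
def FTy.subst (k : ℕ) (B : FTy) : FTy → FTy
  | .var n => if n = k then FTy.shift k 0 B else if k < n then .var (n - 1) else .var n
  | .arrow A A' => .arrow (FTy.subst k B A) (FTy.subst k B A')
  | .all A => .all (FTy.subst (k + 1) B A)
  | .one => .one
  | .prod A A' => .prod (FTy.subst k B A) (FTy.subst k B A')

/-- One-step reduction in System F with pairs. -/
inductive FStep : FTm → FTm → Prop
  | beta (t u : FTm) : FStep (.app (.lam t) u) (FTm.subst 0 u t)
  | plPair (t u : FTm) : FStep (.pl (.pair t u)) t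
  | prPair (t u : FTm) : FStep (.pr (.pair t u)) u
  | eta (t : FTm) : FStep (.lam (.app (FTm.shift 1 0 t) (.var 0))) t
  | sp (p : FTm) : FStep (.pair (.pl p) (.pr p)) p
  | lamCongr : FStep t t' → FStep (.lam t) (.lam t')
  | appLeft : FStep t t' → FStep (.app t u) (.app t' u)
  | appRight : FStep u u' → FStep (.app t u) (.app t u')
  | pairLeft : FStep t t' → FStep (.pair t u) (.pair t' u)
  | pairRight : FStep u u' → FStep (.pair t u) (.pair t u')
  | plCongr : FStep t t' → FStep (.pl t) (.pl t')
  | prCongr : FStep t t' → FStep (.pr t) (.pr t')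

/-- Typing in System F with pairs. -/
inductive FTyping : List FTy → FTm → FTy → Prop
  | ax {Γ n A} : Γ[n]? = some A → FTyping Γ (.var n) A
  | star {Γ} : FTyping Γ .star .one
  | lam {Γ A t B} : FTyping (A :: Γ) t B → FTyping Γ (.lam t) (.arrow A B)
  | app {Γ t u A B} : FTyping Γ t (.arrow A B) → FTyping Γ u A → FTyping Γ (.app t u) B
  | pair {Γ t u A B} : FTyping Γ t A → FTyping Γ u B → FTyping Γ (.pair t u) (.prod A B)
  | pl {Γ t A B} : FTyping Γ t (.prod A B) → FTyping Γ (.pl t) A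
  | pr {Γ t A B} : FTyping Γ t (.prod A B) → FTyping Γ (.pr t) B
  | allI {Γ t A} : FTyping (Γ.map (FTy.shift 1 0)) t A → FTyping Γ t (.all A)
  | allE {Γ t A} (B : FTy) : FTyping Γ t (.all A) → FTyping Γ t (FTy.subst 0 B A)

/-! ## The translation from Add_struct into System F with pairs -/

mutual
  /-- Translation of unit types into F-types. -/
  def transU : UTy → FTy
    | .var n => .var n
    | .arrow U T => .arrow (transU U) (transT T)
    | .all U => .all (transU U)

  /-- Translation of Add types into F-types. -/
  def transT : Ty → FTy
    | .unit U => transU U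
    | .add T R => .prod (transT T) (transT R)
    | .zero => .one
end

/-- Labelling of the `ℓ`-leaves of a tree by F-terms (pairs at the nodes, `⋆`
at the `𝟘`-leaves), yielding an F-term. -/
def ATree.labelF : ATree → (List Bool → FTm) → FTm
  | .leaf, f => f []
  | .zleaf, _ => .star
  | .node A B, f => .pair (ATree.labelF A fun w => f (false :: w))
      (ATree.labelF B fun w => f (true :: w))

/-- `π_{w̄}(t)`: the composite of projections along the mirror of the word `w`. -/
def projMirror (w : List Bool) (t : FTm) : FTm :=
  w.foldl (fun s b => if b then .pr s else .pl s) t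

/-- The translation `|t|_D` of a term typed in Add_struct by a derivation `D`
into an F-term. -/
def transD : ∀ {Γ : List UTy} {t : Tm} {T : Ty}, SDeriv Γ t T → FTm
  | _, _, _, .ax _ n _ _ => .var n
  | _, _, _, .axZero _ => .star
  | _, _, _, .arrI D => .lam (transD D)
  | _, _, _, .addI D₁ D₂ => .pair (transD D₁) (transD D₂)
  | _, _, _, .allE _ D => transD D
  | _, _, _, .allI D => transD D
  | _, _, _, .arrE A A' _ _ _ _ _ D₁ D₂ =>
      (A.comp A').labelF fun p =>
        .app (projMirror (A.split p).1 (transD D₁)) (projMirror (A.split p).2 (transD D₂))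

/-! ## Structural reduction (without AC and without the rule `t+𝟎 → t`) -/

/-- One-step reduction by a rule other than `t+𝟎 → t` (and not using the
AC-equivalence, which is absent from Add_struct). -/
inductive SStep : Tm → Tm → Prop
  | distrRight (t u s : Tm) : SStep (.app (.add t u) s) (.add (.app t s) (.app u s))
  | distrLeft (t u s : Tm) : SStep (.app t (.add u s)) (.add (.app t u) (.app t s))
  | zeroApp (t : Tm) : SStep (.app .zero t) .zero
  | appZero (t : Tm) : SStep (.app t .zero) .zero
  | beta (t v : Tm) : IsValue v → SStep (.app (.lam t) v) (Tm.subst 0 v t)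
  | appLeft : SStep t t' → SStep (.app t u) (.app t' u)
  | appRight : SStep u u' → SStep (.app t u) (.app t u')
  | addLeft : SStep t t' → SStep (.add t u) (.add t' u)
  | addRight : SStep u u' → SStep (.add t u) (.add t u')
  | lamCongr : SStep t t' → SStep (.lam t) (.lam t')

/-! ## The partial inverse translation -/

/-- Partial inverse translation on types. -/
def invTy : FTy → Option Ty
  | .var n => some (.unit (.var n))
  | .one => some .zero
  | .all A =>
    match invTy A with
    | some (.unit U) => some (.unit (.all U))
    | _ => none
  | .prod A B =>
    match invTy A, invTy B with
    | some T, some R => some (.add T R)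
    | _, _ => none
  | .arrow A B =>
    match invTy A, invTy B with
    | some (.unit U), some T => some (.unit (.arrow U T))
    | _, _ => none

/-- An F-term of the shape `A[wv ↦ π_{w̄}(t) π_{v̄}(u)]` for a non-trivial tree. -/
def IsTreeApp (s : FTm) : Prop :=
  ∃ (A A' : ATree) (t u : FTm), A.comp A' ≠ .leaf ∧ A.comp A' ≠ .zleaf ∧
    s = (A.comp A').labelF fun p =>
      .app (projMirror (A.split p).1 t) (projMirror (A.split p).2 u)

/-- The partial inverse translation on F-terms, as a relation. -/
inductive InvTm : FTm → Tm → Prop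
  | var (n : ℕ) : InvTm (.var n) (.var n)
  | star : InvTm .star .zero
  | lam : InvTm t t' → InvTm (.lam t) (.lam t')
  | app : InvTm t t' → InvTm u u' → InvTm (.app t u) (.app t' u')
  | treeApp (A A' : ATree) {t u : FTm} {t' u' : Tm} :
      A.comp A' ≠ .leaf → A.comp A' ≠ .zleaf → InvTm t t' → InvTm u u' →
      InvTm ((A.comp A').labelF fun p =>
          .app (projMirror (A.split p).1 t) (projMirror (A.split p).2 u))
        (.app t' u')
  | pair : ¬ IsTreeApp (.pair t u) → InvTm t t' → InvTm u u' →
      InvTm (.pair t u) (.add t' u')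

/-! ### Auxiliary de Bruijn lemmas -/

mutual
theorem UTy.shift_zero : ∀ (A : UTy) (c : ℕ), UTy.shift 0 c A = A
  | .var n, c => by simp only [UTy.shift]; split <;> simp
  | .arrow U T, c => by simp [UTy.shift, UTy.shift_zero U, Ty.shift_zero T]
  | .all U, c => by simp [UTy.shift, UTy.shift_zero U]
theorem Ty.shift_zero : ∀ (A : Ty) (c : ℕ), Ty.shift 0 c A = A
  | .unit U, c => by simp [Ty.shift, UTy.shift_zero U]
  | .add T R, c => by simp [Ty.shift, Ty.shift_zero T, Ty.shift_zero R]
  | .zero, c => by simp [Ty.shift]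
end

-- L1: shift-shift
mutual
theorem UTy.shift_shift : ∀ (A : UTy) (b j e f : ℕ), f ≤ e → e ≤ f + j →
    UTy.shift b e (UTy.shift j f A) = UTy.shift (b + j) f A
  | .var n, b, j, e, f, h1, h2 => by
      rcases lt_or_ge n f with h | h
      · simp only [UTy.shift, if_pos h, if_pos (show n < e by omega)]
      · simp only [UTy.shift, if_neg (not_lt.2 h), if_neg (show ¬ n + j < e by omega)]
        congr 1 <;> omega
  | .arrow U T, b, j, e, f, h1, h2 => by
      simp [UTy.shift, UTy.shift_shift U b j e f h1 h2, Ty.shift_shift T b j e f h1 h2]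
  | .all U, b, j, e, f, h1, h2 => by
      simp [UTy.shift, UTy.shift_shift U b j (e+1) (f+1) (by omega) (by omega)]
theorem Ty.shift_shift : ∀ (A : Ty) (b j e f : ℕ), f ≤ e → e ≤ f + j →
    Ty.shift b e (Ty.shift j f A) = Ty.shift (b + j) f A
  | .unit U, b, j, e, f, h1, h2 => by simp [Ty.shift, UTy.shift_shift U b j e f h1 h2]
  | .add T R, b, j, e, f, h1, h2 => by
      simp [Ty.shift, Ty.shift_shift T b j e f h1 h2, Ty.shift_shift R b j e f h1 h2]
  | .zero, _, _, _, _, _, _ => by simp [Ty.shift]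
end

-- L2: substitution cancels into a shift
mutual
theorem UTy.subst_shift_cancel : ∀ (A : UTy) (X : UTy) (d e k : ℕ), e ≤ k → k < e + (d+1) →
    UTy.subst k X (UTy.shift (d+1) e A) = UTy.shift d e A
  | .var n, X, d, e, k, h1, h2 => by
      rcases lt_or_ge n e with h | h
      · simp only [UTy.shift, if_pos h, UTy.subst, if_neg (show ¬ n = k by omega),
          if_neg (show ¬ k < n by omega)]
      · have h3 : ¬ (n + (d+1) = k) := by omega
        have h4 : k < n + (d+1) := by omega
        simp only [UTy.shift, if_neg (not_lt.2 h), UTy.subst, if_neg h3, if_pos h4]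
        all_goals (congr 1 <;> omega)
  | .arrow U T, X, d, e, k, h1, h2 => by
      simp [UTy.shift, UTy.subst, UTy.subst_shift_cancel U X d e k h1 h2,
        Ty.subst_shift_cancel T X d e k h1 h2]
  | .all U, X, d, e, k, h1, h2 => by
      simp [UTy.shift, UTy.subst, UTy.subst_shift_cancel U X d (e+1) (k+1) (by omega) (by omega)]
theorem Ty.subst_shift_cancel : ∀ (A : Ty) (X : UTy) (d e k : ℕ), e ≤ k → k < e + (d+1) →
    Ty.subst k X (Ty.shift (d+1) e A) = Ty.shift d e A
  | .unit U, X, d, e, k, h1, h2 => by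
      simp [Ty.shift, Ty.subst, UTy.subst_shift_cancel U X d e k h1 h2]
  | .add T R, X, d, e, k, h1, h2 => by
      simp [Ty.shift, Ty.subst, Ty.subst_shift_cancel T X d e k h1 h2,
        Ty.subst_shift_cancel R X d e k h1 h2]
  | .zero, _, _, _, _, _, _ => by simp [Ty.shift, Ty.subst]
end

-- L3: subst commutes with shift
mutual
theorem UTy.subst_shift : ∀ (A : UTy) (X : UTy) (b e j : ℕ), e ≤ j →
    UTy.subst (j + b) X (UTy.shift b e A) = UTy.shift b e (UTy.subst j X A)
  | .var n, X, b, e, j, h1 => by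
      rcases lt_or_ge n e with h | h
      · simp only [UTy.shift, if_pos h, UTy.subst, if_neg (show ¬ n = j + b by omega),
          if_neg (show ¬ j + b < n by omega), if_neg (show ¬ n = j by omega),
          if_neg (show ¬ j < n by omega), if_pos h]
      · rcases Nat.lt_trichotomy n j with h2 | h2 | h2
        · simp only [UTy.shift, if_neg (not_lt.2 h), UTy.subst,
            if_neg (show ¬ n + b = j + b by omega), if_neg (show ¬ j + b < n + b by omega),
            if_neg (show ¬ n = j by omega), if_neg (show ¬ j < n by omega),
            if_neg (not_lt.2 h)]
        · subst h2
          simp only [UTy.shift, if_neg (not_lt.2 h), UTy.subst, if_pos rfl]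
          rw [Nat.add_comm n b]
          exact (UTy.shift_shift X b n e 0 (by omega) (by omega)).symm
        · simp only [UTy.shift, if_neg (not_lt.2 h), UTy.subst,
            if_neg (show ¬ n + b = j + b by omega), if_pos (show j + b < n + b by omega),
            if_neg (show ¬ n = j by omega), if_pos h2,
            if_neg (show ¬ n - 1 < e by omega)]
          congr 1 <;> omega
  | .arrow U T, X, b, e, j, h1 => by
      simp [UTy.shift, UTy.subst, UTy.subst_shift U X b e j h1, Ty.subst_shift T X b e j h1]
  | .all U, X, b, e, j, h1 => by
      have := UTy.subst_shift U X b (e+1) (j+1) (by omega)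
      simp only [UTy.shift, UTy.subst]
      rw [show j + b + 1 = (j+1) + b by omega, this]
theorem Ty.subst_shift : ∀ (A : Ty) (X : UTy) (b e j : ℕ), e ≤ j →
    Ty.subst (j + b) X (Ty.shift b e A) = Ty.shift b e (Ty.subst j X A)
  | .unit U, X, b, e, j, h1 => by simp [Ty.shift, Ty.subst, UTy.subst_shift U X b e j h1]
  | .add T R, X, b, e, j, h1 => by
      simp [Ty.shift, Ty.subst, Ty.subst_shift T X b e j h1, Ty.subst_shift R X b e j h1]
  | .zero, _, _, _, _, _ => by simp [Ty.shift, Ty.subst]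
end

-- L4: subst-subst commutation
mutual
theorem UTy.subst_subst : ∀ (A : UTy) (V W : UTy) (b j : ℕ),
    UTy.subst (b + j) W (UTy.subst b V A) =
      UTy.subst b (UTy.subst j W V) (UTy.subst (b + j + 1) W A)
  | .var n, V, W, b, j => by
      rcases Nat.lt_trichotomy n b with h | h | h
      · simp only [UTy.subst, if_neg (show ¬ n = b by omega), if_neg (show ¬ b < n by omega),
          if_neg (show ¬ n = b + j by omega), if_neg (show ¬ b + j < n by omega),
          if_neg (show ¬ n = b + j + 1 by omega), if_neg (show ¬ b + j + 1 < n by omega)]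
      · subst h
        simp only [UTy.subst, if_pos rfl, if_neg (show ¬ n = n + j + 1 by omega),
          if_neg (show ¬ n + j + 1 < n by omega), if_pos rfl]
        rw [Nat.add_comm n j]
        exact UTy.subst_shift V W n 0 j (by omega)
      · rcases Nat.lt_trichotomy n (b + j + 1) with h2 | h2 | h2
        · simp only [UTy.subst, if_neg (show ¬ n = b by omega), if_pos h,
            if_neg (show ¬ n - 1 = b + j by omega), if_neg (show ¬ b + j < n - 1 by omega),
            if_neg (show ¬ n = b + j + 1 by omega), if_neg (show ¬ b + j + 1 < n by omega),
            if_neg (show ¬ n = b by omega), if_pos h]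
        · subst h2
          simp only [UTy.subst, if_neg (show ¬ b + j + 1 = b by omega),
            if_pos (show b < b + j + 1 by omega), if_pos (show b + j + 1 - 1 = b + j by omega),
            if_pos rfl]
          exact (UTy.subst_shift_cancel W _ (b+j) 0 b (by omega) (by omega)).symm
        · simp only [UTy.subst, if_neg (show ¬ n = b by omega), if_pos h,
            if_neg (show ¬ n - 1 = b + j by omega), if_pos (show b + j < n - 1 by omega),
            if_neg (show ¬ n = b + j + 1 by omega), if_pos (show b + j + 1 < n by omega),
            if_neg (show ¬ n - 1 = b by omega), if_pos (show b < n - 1 by omega)]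
  | .arrow U T, V, W, b, j => by
      simp [UTy.subst, UTy.subst_subst U V W b j, Ty.subst_subst T V W b j]
  | .all U, V, W, b, j => by
      have := UTy.subst_subst U V W (b+1) j
      simp only [UTy.subst]
      rw [show b + j + 1 = (b + 1) + j by omega, this]
      all_goals (congr 2 <;> omega)
theorem Ty.subst_subst : ∀ (A : Ty) (V W : UTy) (b j : ℕ),
    Ty.subst (b + j) W (Ty.subst b V A) =
      Ty.subst b (UTy.subst j W V) (Ty.subst (b + j + 1) W A)
  | .unit U, V, W, b, j => by simp [Ty.subst, UTy.subst_subst U V W b j]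
  | .add T R, V, W, b, j => by
      simp [Ty.subst, Ty.subst_subst T V W b j, Ty.subst_subst R V W b j]
  | .zero, _, _, _, _ => by simp [Ty.subst]
end

/-! ### Distribution of substitution over sums, quantifiers, iterated substitution -/

theorem sumT_subst_aux (k : ℕ) (V : UTy) :
    ∀ (l : List Ty) (acc : Ty),
      Ty.subst k V (l.foldl Ty.add acc) = (l.map (Ty.subst k V)).foldl Ty.add (Ty.subst k V acc)
  | [], acc => rfl
  | T :: l, acc => by
      simp only [List.foldl_cons, List.map_cons, sumT_subst_aux k V l (acc.add T)]
      rfl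

theorem sumT_subst (k : ℕ) (V : UTy) (l : List Ty) :
    Ty.subst k V (sumT l) = sumT (l.map (Ty.subst k V)) := by
  simpa [sumT, Ty.subst] using sumT_subst_aux k V l .zero

theorem allN_subst (V : UTy) : ∀ (q k : ℕ) (A : UTy),
    UTy.subst k V (allN q A) = allN q (UTy.subst (k + q) V A)
  | 0, k, A => by simp [allN]
  | q + 1, k, A => by
      simp only [allN, UTy.subst]
      rw [allN_subst V q (k+1) A, show k + (q+1) = k+1+q from by omega]

/-- Substitution applied to each element of a simultaneous-substitution list,
with appropriately decreasing indices. -/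
def substList (k : ℕ) (W : UTy) : List UTy → List UTy
  | [] => []
  | V :: rest => UTy.subst (k + rest.length) W V :: substList k W rest

@[simp] theorem substList_length (k : ℕ) (W : UTy) :
    ∀ (l : List UTy), (substList k W l).length = l.length
  | [] => rfl
  | V :: rest => by simp [substList, substList_length k W rest]

theorem UTy.msubst_subst (k : ℕ) (W : UTy) :
    ∀ (Vj : List UTy) (U : UTy),
      UTy.subst k W (UTy.msubst Vj U)
        = UTy.msubst (substList k W Vj) (UTy.subst (k + Vj.length) W U)
  | [], U => by simp [UTy.msubst, substList]
  | V :: rest, U => by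
      simp only [UTy.msubst, List.foldl_cons, substList]
      have := UTy.msubst_subst k W rest (UTy.subst 0 V U)
      simp only [UTy.msubst] at this
      rw [this]
      congr 1
      have h4 := UTy.subst_subst U V W 0 (k + rest.length)
      simp only [Nat.zero_add] at h4
      rw [h4]
      have hl : k + (V :: rest).length = k + rest.length + 1 := by simp; omega
      rw [hl]

theorem Ty.msubst_subst (k : ℕ) (W : UTy) :
    ∀ (Vj : List UTy) (T : Ty),
      Ty.subst k W (Ty.msubst Vj T)
        = Ty.msubst (substList k W Vj) (Ty.subst (k + Vj.length) W T)
  | [], T => by simp [Ty.msubst, substList]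
  | V :: rest, T => by
      simp only [Ty.msubst, List.foldl_cons, substList]
      have := Ty.msubst_subst k W rest (Ty.subst 0 V T)
      simp only [Ty.msubst] at this
      rw [this]
      congr 1
      have h4 := Ty.subst_subst T V W 0 (k + rest.length)
      simp only [Nat.zero_add] at h4
      rw [h4]
      have hl : k + (V :: rest).length = k + rest.length + 1 := by simp; omega
      rw [hl]

/-! ### Raw variable bounds and abstraction lemmas -/

mutual
/-- An upper bound on all (raw) variable indices occurring in a unit type. -/
def UTy.mraw : UTy → ℕ
  | .var n => n
  | .arrow U T => max (UTy.mraw U) (Ty.mraw T)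
  | .all U => UTy.mraw U
/-- An upper bound on all (raw) variable indices occurring in a type. -/
def Ty.mraw : Ty → ℕ
  | .unit U => UTy.mraw U
  | .add T R => max (Ty.mraw T) (Ty.mraw R)
  | .zero => 0
end

-- Substituting at the bound variable of a fresh abstraction is the identity.
mutual
theorem UTy.subst_absAux_zero : ∀ (A : UTy) (W : UTy) (c : ℕ),
    UTy.subst (c+1) W (UTy.absAux 0 c A) = A
  | .var n, W, c => by
      rcases Nat.lt_trichotomy n c with h | h | h
      · simp only [UTy.absAux, if_neg (show ¬ n = 0 + c by omega),
          if_neg (show ¬ c ≤ n by omega), UTy.subst, if_neg (show ¬ n = c + 1 by omega),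
          if_neg (show ¬ c + 1 < n by omega)]
      · subst h
        simp only [UTy.absAux, if_pos (show n = 0 + n by omega), UTy.subst,
          if_neg (show ¬ n = n + 1 by omega), if_neg (show ¬ n + 1 < n by omega)]
      · simp only [UTy.absAux, if_neg (show ¬ n = 0 + c by omega),
          if_pos (show c ≤ n by omega), UTy.subst, if_neg (show ¬ n + 1 = c + 1 by omega),
          if_pos (show c + 1 < n + 1 by omega)]
        all_goals (congr 1 <;> omega)
  | .arrow U T, W, c => by
      simp [UTy.absAux, UTy.subst, UTy.subst_absAux_zero U W c, Ty.subst_absAux_zero T W c]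
  | .all U, W, c => by
      simp [UTy.absAux, UTy.subst, UTy.subst_absAux_zero U W (c+1)]
theorem Ty.subst_absAux_zero : ∀ (A : Ty) (W : UTy) (c : ℕ),
    Ty.subst (c+1) W (Ty.absAux 0 c A) = A
  | .unit U, W, c => by simp [Ty.absAux, Ty.subst, UTy.subst_absAux_zero U W c]
  | .add T R, W, c => by
      simp [Ty.absAux, Ty.subst, Ty.subst_absAux_zero T W c, Ty.subst_absAux_zero R W c]
  | .zero, _, _ => by simp [Ty.absAux, Ty.subst]
end

-- Abstracting a variable that does not occur is a mere shift.
mutual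
theorem UTy.absAux_fresh : ∀ (A : UTy) (X c : ℕ), UTy.mraw A < X + c →
    UTy.absAux X c A = UTy.shift 1 c A
  | .var n, X, c, h => by
      simp only [UTy.mraw] at h
      simp only [UTy.absAux, UTy.shift, if_neg (show ¬ n = X + c by omega)]
      rcases lt_or_ge n c with h2 | h2
      · rw [if_neg (show ¬ c ≤ n by omega), if_pos h2]
      · rw [if_pos h2, if_neg (not_lt.2 h2)]
  | .arrow U T, X, c, h => by
      simp only [UTy.mraw, max_lt_iff] at h
      simp [UTy.absAux, UTy.shift, UTy.absAux_fresh U X c h.1, Ty.absAux_fresh T X c h.2]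
  | .all U, X, c, h => by
      simp only [UTy.mraw] at h
      simp [UTy.absAux, UTy.shift, UTy.absAux_fresh U X (c+1) (by omega)]
theorem Ty.absAux_fresh : ∀ (A : Ty) (X c : ℕ), Ty.mraw A < X + c →
    Ty.absAux X c A = Ty.shift 1 c A
  | .unit U, X, c, h => by
      simp only [Ty.mraw] at h
      simp [Ty.absAux, Ty.shift, UTy.absAux_fresh U X c h]
  | .add T R, X, c, h => by
      simp only [Ty.mraw, max_lt_iff] at h
      simp [Ty.absAux, Ty.shift, Ty.absAux_fresh T X c h.1, Ty.absAux_fresh R X c h.2]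
  | .zero, _, _, _ => by simp [Ty.absAux, Ty.shift]
end

-- Commutation of abstraction with the substitution `var 0 ↦ var N, var (n+1) ↦ var n`.
mutual
theorem UTy.absAux_subst : ∀ (A : UTy) (X Y N c : ℕ),
    ((X = 0 ∧ Y = N) ∨ (1 ≤ X ∧ Y = X - 1 ∧ X ≤ N)) → UTy.mraw A ≤ N + c →
    UTy.subst (c+1) (UTy.var N) (UTy.absAux X c A)
      = UTy.absAux Y c (UTy.subst c (UTy.var N) A)
  | .var n, X, Y, N, c, hXY, hA => by
      simp only [UTy.mraw] at hA
      rcases hXY with ⟨hX, hY⟩ | ⟨hX, hY, hXN⟩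
      · subst hX; subst hY
        rcases Nat.lt_trichotomy n c with h | h | h
        · simp only [UTy.absAux, UTy.subst, if_neg (show ¬ n = 0 + c by omega),
            if_neg (show ¬ c ≤ n by omega), if_neg (show ¬ n = c + 1 by omega),
            if_neg (show ¬ c + 1 < n by omega), if_neg (show ¬ n = c by omega),
            if_neg (show ¬ c < n by omega), if_neg (show ¬ n = Y + c by omega)]
        · subst h
          simp only [UTy.absAux, UTy.subst, if_pos (show n = 0 + n by omega),
            if_neg (show ¬ n = n + 1 by omega), if_neg (show ¬ n + 1 < n by omega),
            if_pos rfl, UTy.shift, if_neg (show ¬ Y < 0 by omega)]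
          simp [UTy.absAux]
        · simp only [UTy.absAux, UTy.subst, if_neg (show ¬ n = 0 + c by omega),
            if_pos (show c ≤ n by omega), if_neg (show ¬ n + 1 = c + 1 by omega),
            if_pos (show c + 1 < n + 1 by omega), if_neg (show ¬ n = c by omega),
            if_pos (show c < n by omega), if_neg (show ¬ n - 1 = Y + c by omega),
            if_pos (show c ≤ n - 1 by omega)]
          all_goals (congr 1 <;> omega)
      · subst hY
        rcases Nat.lt_trichotomy n c with h | h | h
        · simp only [UTy.absAux, UTy.subst, if_neg (show ¬ n = X + c by omega),
            if_neg (show ¬ c ≤ n by omega), if_neg (show ¬ n = c + 1 by omega),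
            if_neg (show ¬ c + 1 < n by omega), if_neg (show ¬ n = c by omega),
            if_neg (show ¬ c < n by omega), if_neg (show ¬ n = X - 1 + c by omega),
            if_neg (show ¬ c ≤ n by omega)]
        · subst h
          simp only [UTy.absAux, UTy.subst, if_neg (show ¬ n = X + n by omega),
            if_pos (le_refl n), if_pos rfl, UTy.shift, if_neg (show ¬ N < 0 by omega),
            if_neg (show ¬ N + n = X - 1 + n by omega), if_pos (show n ≤ N + n by omega),
            if_true]
          all_goals (congr 1 <;> omega)
        · by_cases hx : n = X + c
          · simp only [UTy.absAux, UTy.subst, if_pos hx, if_neg (show ¬ c = c + 1 by omega),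
              if_neg (show ¬ c + 1 < c by omega), if_neg (show ¬ n = c by omega),
              if_pos (show c < n by omega), if_pos (show n - 1 = X - 1 + c by omega)]
          · simp only [UTy.absAux, UTy.subst, if_neg hx, if_pos (show c ≤ n by omega),
              if_neg (show ¬ n + 1 = c + 1 by omega), if_pos (show c + 1 < n + 1 by omega),
              if_neg (show ¬ n = c by omega), if_pos (show c < n by omega),
              if_neg (show ¬ n - 1 = X - 1 + c by omega), if_pos (show c ≤ n - 1 by omega)]
            all_goals (congr 1 <;> omega)
  | .arrow U T, X, Y, N, c, hXY, hA => by
      simp only [UTy.mraw, max_le_iff] at hA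
      simp [UTy.absAux, UTy.subst, UTy.absAux_subst U X Y N c hXY hA.1,
        Ty.absAux_subst T X Y N c hXY hA.2]
  | .all U, X, Y, N, c, hXY, hA => by
      simp only [UTy.mraw] at hA
      simp [UTy.absAux, UTy.subst, UTy.absAux_subst U X Y N (c+1) hXY (by omega)]
theorem Ty.absAux_subst : ∀ (A : Ty) (X Y N c : ℕ),
    ((X = 0 ∧ Y = N) ∨ (1 ≤ X ∧ Y = X - 1 ∧ X ≤ N)) → Ty.mraw A ≤ N + c →
    Ty.subst (c+1) (UTy.var N) (Ty.absAux X c A)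
      = Ty.absAux Y c (Ty.subst c (UTy.var N) A)
  | .unit U, X, Y, N, c, hXY, hA => by
      simp only [Ty.mraw] at hA
      simp [Ty.absAux, Ty.subst, UTy.absAux_subst U X Y N c hXY hA]
  | .add T R, X, Y, N, c, hXY, hA => by
      simp only [Ty.mraw, max_le_iff] at hA
      simp [Ty.absAux, Ty.subst, Ty.absAux_subst T X Y N c hXY hA.1,
        Ty.absAux_subst R X Y N c hXY hA.2]
  | .zero, _, _, _, _, _, _ => by simp [Ty.absAux, Ty.subst]
end

/-! ### Stability of type equivalence under substitution -/

section EqSubst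

private def MU (U V : UTy) (_ : UEq U V) : Prop :=
  ∀ k W, UEq (UTy.subst k W U) (UTy.subst k W V)
private def MT (T R : Ty) (_ : TEq T R) : Prop :=
  ∀ k W, TEq (Ty.subst k W T) (Ty.subst k W R)

theorem ueq_subst {U V : UTy} (h : UEq U V) (k : ℕ) (W : UTy) :
    UEq (UTy.subst k W U) (UTy.subst k W V) := by
  refine UEq.rec (motive_1 := MU) (motive_2 := MT)
    ?_ ?_ ?_ ?_ ?_ ?_ ?_ ?_ ?_ ?_ ?_ ?_ ?_ h k W
  · exact fun U k W => UEq.refl _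
  · exact fun _ ih k W => (ih k W).symm
  · exact fun _ _ ih1 ih2 k W => (ih1 k W).trans (ih2 k W)
  · exact fun _ _ ih1 ih2 k W => UEq.arrow (ih1 k W) (ih2 k W)
  · exact fun _ ih k W => UEq.all (ih (k+1) W)
  · exact fun T k W => TEq.refl _
  · exact fun _ ih k W => (ih k W).symm
  · exact fun _ _ ih1 ih2 k W => (ih1 k W).trans (ih2 k W)
  · exact fun _ ih k W => TEq.unit (ih k W)
  · exact fun _ _ ih1 ih2 k W => TEq.addCongr (ih1 k W) (ih2 k W)
  · exact fun T R k W => TEq.comm _ _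
  · exact fun T R S k W => TEq.assoc _ _ _
  · exact fun T k W => TEq.zero _

theorem teq_subst {T R : Ty} (h : TEq T R) (k : ℕ) (W : UTy) :
    TEq (Ty.subst k W T) (Ty.subst k W R) := by
  refine TEq.rec (motive_1 := MU) (motive_2 := MT)
    ?_ ?_ ?_ ?_ ?_ ?_ ?_ ?_ ?_ ?_ ?_ ?_ ?_ h k W
  · exact fun U k W => UEq.refl _
  · exact fun _ ih k W => (ih k W).symm
  · exact fun _ _ ih1 ih2 k W => (ih1 k W).trans (ih2 k W)
  · exact fun _ _ ih1 ih2 k W => UEq.arrow (ih1 k W) (ih2 k W)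
  · exact fun _ ih k W => UEq.all (ih (k+1) W)
  · exact fun T k W => TEq.refl _
  · exact fun _ ih k W => (ih k W).symm
  · exact fun _ _ ih1 ih2 k W => (ih1 k W).trans (ih2 k W)
  · exact fun _ ih k W => TEq.unit (ih k W)
  · exact fun _ _ ih1 ih2 k W => TEq.addCongr (ih1 k W) (ih2 k W)
  · exact fun T R k W => TEq.comm _ _
  · exact fun T R S k W => TEq.assoc _ _ _
  · exact fun T k W => TEq.zero _

end EqSubst

/-! ### Shape lemmas for the `arrE` types, and the typing substitution lemma -/

theorem shapeT (k q : ℕ) (V U : UTy) (Ts : List Ty) :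
    Ty.subst k V (sumT (Ts.map fun Ti => .unit (allN q (.arrow U Ti))))
      = sumT ((Ts.map (Ty.subst (k + q) V)).map fun Ti =>
          .unit (allN q (.arrow (UTy.subst (k + q) V U) Ti))) := by
  rw [sumT_subst]
  apply congrArg sumT
  simp only [List.map_map]
  apply List.map_congr_left
  intro Ti _
  simp only [Function.comp_apply, Ty.subst, allN_subst, UTy.subst]

theorem shapeU (k q : ℕ) (V U : UTy) (Vs : List (List UTy))
    (hlen : ∀ Vj ∈ Vs, Vj.length = q) :
    Ty.subst k V (sumT (Vs.map fun Vj => .unit (UTy.msubst Vj U)))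
      = sumT ((Vs.map (substList k V)).map fun Vj =>
          .unit (UTy.msubst Vj (UTy.subst (k + q) V U))) := by
  rw [sumT_subst]
  apply congrArg sumT
  simp only [List.map_map]
  apply List.map_congr_left
  intro Vj hVj
  simp only [Function.comp_apply, Ty.subst, UTy.msubst_subst, hlen Vj hVj]

theorem shapeC (k q : ℕ) (V : UTy) (Ts : List Ty) (Vs : List (List UTy))
    (hlen : ∀ Vj ∈ Vs, Vj.length = q) :
    Ty.subst k V (sumT ((Ts.map fun Ti => Vs.map fun Vj => Ty.msubst Vj Ti).flatten))
      = sumT (((Ts.map (Ty.subst (k + q) V)).map fun Ti =>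
          (Vs.map (substList k V)).map fun Vj => Ty.msubst Vj Ti).flatten) := by
  rw [sumT_subst]
  apply congrArg sumT
  rw [List.map_flatten]
  apply congrArg List.flatten
  simp only [List.map_map]
  apply List.map_congr_left
  intro Ti _
  simp only [Function.comp_apply, List.map_map]
  apply List.map_congr_left
  intro Vj hVj
  simp only [Function.comp_apply, Ty.msubst_subst, hlen Vj hVj]

theorem liftCtx_subst_cancel (Γ : List UTy) (V : UTy) :
    (liftCtx Γ).map (UTy.subst 0 V) = Γ := by
  rw [liftCtx, List.map_map]
  have : (UTy.subst 0 V ∘ UTy.shift 1 0) = id := by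
    funext W
    have := UTy.subst_shift_cancel W V 0 0 0 (le_refl 0) (by omega)
    simpa [UTy.shift_zero] using this
  rw [this, List.map_id]

/-- Stability of typing under type substitution. -/
theorem typing_subst {Γ : List UTy} {s : Tm} {T : Ty} (h : Typing Γ s T) :
    ∀ (k : ℕ) (V : UTy), Typing (Γ.map (UTy.subst k V)) s (Ty.subst k V T) := by
  induction h with
  | ax hget => intro k V; exact Typing.ax (by simp [hget])
  | axZero => intro k V; exact Typing.axZero
  | equiv _ hEq ih => intro k V; exact (ih k V).equiv (teq_subst hEq k V)
  | arrI _ ih => intro k V; exact Typing.arrI (ih k V)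
  | @arrE Γ t u q U Ts Vs hTs hVs hlen _ _ ih1 ih2 =>
      intro k V
      have h1 := ih1 k V
      have h2 := ih2 k V
      rw [shapeT k q V U Ts] at h1
      rw [shapeU k q V U Vs hlen] at h2
      rw [shapeC k q V Ts Vs hlen]
      exact Typing.arrE (by simpa using hTs) (by simpa using hVs)
        (by intro Vj hVj
            simp only [List.mem_map] at hVj
            obtain ⟨Vj0, hVj0, rfl⟩ := hVj
            simp [hlen Vj0 hVj0]) h1 h2
  | addI _ _ ih1 ih2 => intro k V; exact Typing.addI (ih1 k V) (ih2 k V)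
  | @allE Γ t U W _ ih =>
      intro k V
      have h1 := ih k V
      simp only [Ty.subst, UTy.subst] at h1
      have := Typing.allE (UTy.subst k V W) h1
      have hc := UTy.subst_subst U W V 0 k
      simp only [Nat.zero_add] at hc
      simpa only [Ty.subst, UTy.subst, hc] using this
  | @allI Γ t U _ ih =>
      intro k V
      have h1 := ih (k+1) V
      have hctx : (liftCtx Γ).map (UTy.subst (k+1) V) = liftCtx (Γ.map (UTy.subst k V)) := by
        simp only [liftCtx, List.map_map]
        apply List.map_congr_left
        intro W _
        have := UTy.subst_shift W V 1 0 k (by omega)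
        simpa [Function.comp] using this
      rw [hctx] at h1
      exact Typing.allI h1

/-! ### Stability of `⋖` and `≼` under the substitution `X₀ ↦ X_N` -/

theorem genAll_eq_of_fresh {U : UTy} {X X' : ℕ} (h : UTy.mraw U < X) (h' : UTy.mraw U < X') :
    UTy.genAll X U = UTy.genAll X' U := by
  unfold UTy.genAll
  rw [UTy.absAux_fresh U X 0 (by omega), UTy.absAux_fresh U X' 0 (by omega)]

theorem ssub_subst {U1 U2 : UTy} (h : SSub U1 U2) :
    ∃ N₀, ∀ N ≥ N₀, SSub (UTy.subst 0 (UTy.var N) U1) (UTy.subst 0 (UTy.var N) U2) := by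
  rcases h with ⟨X, hEq⟩ | ⟨U', V, h1, h2⟩
  · -- gen case
    set M := UTy.mraw U1 with hM
    have hEq' : UEq U2 (UTy.genAll (min X (M+1)) U1) := by
      rcases le_or_gt X (M+1) with hx | hx
      · rwa [min_eq_left hx]
      · rw [min_eq_right (by omega)]
        rwa [genAll_eq_of_fresh (show M < X by omega) (show M < M+1 by omega)] at hEq
    set X' := min X (M+1) with hX'
    refine ⟨M + 2, fun N hN => ?_⟩
    have hXY : (X' = 0 ∧ (if X' = 0 then N else X' - 1) = N) ∨
        (1 ≤ X' ∧ (if X' = 0 then N else X' - 1) = X' - 1 ∧ X' ≤ N) := by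
      by_cases h0 : X' = 0
      · exact Or.inl ⟨h0, if_pos h0⟩
      · exact Or.inr ⟨by omega, if_neg h0, by omega⟩
    have habs := UTy.absAux_subst U1 X' (if X' = 0 then N else X' - 1) N 0 hXY (by omega)
    have hgen : UTy.subst 0 (UTy.var N) (UTy.genAll X' U1)
        = UTy.genAll (if X' = 0 then N else X' - 1) (UTy.subst 0 (UTy.var N) U1) := by
      show UTy.all (UTy.subst 1 (UTy.var N) (UTy.absAux X' 0 U1)) = _
      rw [habs]
      rfl
    refine SSub.gen (if X' = 0 then N else X' - 1) ?_
    have := ueq_subst hEq' 0 (UTy.var N)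
    rwa [hgen] at this
  · -- inst case
    refine ⟨0, fun N _ => ?_⟩
    refine SSub.inst (UTy.subst 1 (UTy.var N) U') (UTy.subst 0 (UTy.var N) V) ?_ ?_
    · exact ueq_subst h1 0 (UTy.var N)
    · have := ueq_subst h2 0 (UTy.var N)
      have hc := UTy.subst_subst U' V (UTy.var N) 0 0
      simp only [Nat.zero_add] at hc
      rwa [hc] at this

theorem tpre_subst {T R : Ty} (h : TPre T R) :
    ∃ N₀, ∀ N ≥ N₀, TPre (Ty.subst 0 (UTy.var N) T) (Ty.subst 0 (UTy.var N) R) := by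
  induction h with
  | ofEq hEq => exact ⟨0, fun N _ => TPre.ofEq (teq_subst hEq 0 (UTy.var N))⟩
  | ofSSub hS =>
      obtain ⟨N₀, hN⟩ := ssub_subst hS
      exact ⟨N₀, fun N h => TPre.ofSSub (hN N h)⟩
  | trans _ _ ih1 ih2 =>
      obtain ⟨N₁, h1⟩ := ih1
      obtain ⟨N₂, h2⟩ := ih2
      exact ⟨max N₁ N₂, fun N h => (h1 N (le_trans (le_max_left _ _) h)).trans
        (h2 N (le_trans (le_max_right _ _) h))⟩

/-! ### The generation lemma -/

theorem gen_aux : ∀ {Γ : List UTy} {s : Tm} {T : Ty}, Typing Γ s T →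
    ∀ t u, s = Tm.app t u →
    ∃ (Ts : List Ty) (U : UTy) (k : ℕ) (Vs : List (List UTy)),
      Ts ≠ [] ∧ Vs ≠ [] ∧ (∀ V ∈ Vs, V.length = k) ∧
      Typing Γ t (sumT (Ts.map fun Ti => .unit (allN k (.arrow U Ti)))) ∧
      Typing Γ u (sumT (Vs.map fun Vj => .unit (UTy.msubst Vj U))) ∧
      TPre (sumT ((Ts.map fun Ti => Vs.map fun Vj => Ty.msubst Vj Ti).flatten)) T := by
  intro Γ s T h
  induction h with
  | ax _ => intro t u hs; cases hs
  | axZero => intro t u hs; cases hs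
  | arrI _ _ => intro t u hs; cases hs
  | addI _ _ _ _ => intro t u hs; cases hs
  | equiv _ hEq ih =>
      intro t u hs
      obtain ⟨Ts, U, k, Vs, hTs, hVs, hlen, ht, hu, hpre⟩ := ih t u hs
      exact ⟨Ts, U, k, Vs, hTs, hVs, hlen, ht, hu, hpre.trans (TPre.ofEq hEq)⟩
  | @arrE Γ t0 u0 q U Ts Vs hTs hVs hlen h1 h2 _ _ =>
      intro t u hs
      cases hs
      exact ⟨Ts, U, q, Vs, hTs, hVs, hlen, h1, h2, TPre.ofEq (TEq.refl _)⟩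
  | @allE Γ t0 U V _ ih =>
      intro t u hs
      obtain ⟨Ts, U0, k, Vs, hTs, hVs, hlen, ht, hu, hpre⟩ := ih t u hs
      exact ⟨Ts, U0, k, Vs, hTs, hVs, hlen, ht, hu,
        hpre.trans (TPre.ofSSub (SSub.inst U V (UEq.refl _) (UEq.refl _)))⟩
  | @allI Γ t0 U _ ih =>
      intro t u hs
      obtain ⟨Ts, U0, k, Vs, hTs, hVs, hlen, ht, hu, hpre⟩ := ih t u hs
      obtain ⟨N₀, hNpre⟩ := tpre_subst hpre
      set N := max N₀ (UTy.mraw U) with hNdef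
      have hN1 : N₀ ≤ N := le_max_left _ _
      have hN2 : UTy.mraw U ≤ N := le_max_right _ _
      -- transport the typings from `liftCtx Γ` down to `Γ`
      have ht' := typing_subst ht 0 (UTy.var N)
      have hu' := typing_subst hu 0 (UTy.var N)
      rw [liftCtx_subst_cancel, shapeT 0 k (UTy.var N) U0 Ts] at ht'
      rw [liftCtx_subst_cancel, shapeU 0 k (UTy.var N) U0 Vs hlen] at hu'
      refine ⟨Ts.map (Ty.subst (0 + k) (UTy.var N)), UTy.subst (0 + k) (UTy.var N) U0, k,
        Vs.map (substList 0 (UTy.var N)), by simpa using hTs, by simpa using hVs, ?_, ht', hu', ?_⟩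
      · intro Vj hVj
        simp only [List.mem_map] at hVj
        obtain ⟨Vj0, hVj0, rfl⟩ := hVj
        simp [hlen Vj0 hVj0]
      · have hpre' := hNpre N hN1
        rw [shapeC 0 k (UTy.var N) Ts Vs hlen] at hpre'
        refine hpre'.trans (TPre.ofSSub (SSub.gen N ?_))
        have habs := UTy.absAux_subst U 0 N N 0 (Or.inl ⟨rfl, rfl⟩) (by omega)
        have hz := UTy.subst_absAux_zero U (UTy.var N) 0
        have : UTy.genAll N (UTy.subst 0 (UTy.var N) U) = UTy.all U := by
          unfold UTy.genAll
          rw [← habs]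
          exact congrArg UTy.all hz
        rw [this]
        exact UEq.refl _
/-- **Generation lemma for applications** (Lemma 7.1).  If `Γ ⊢ t u : T` then
`Γ ⊢ t : Σᵢ ∀X⃗.(U→Tᵢ)` and `Γ ⊢ u : Σⱼ U[V⃗ⱼ/X⃗]` for some nonempty sums,
with `ΣᵢΣⱼ Tᵢ[V⃗ⱼ/X⃗] ≼ T`. -/
theorem generation_app {Γ : List UTy} {t u : Tm} {T : Ty}
    (h : Typing Γ (.app t u) T) :
    ∃ (Ts : List Ty) (U : UTy) (k : ℕ) (Vs : List (List UTy)),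
      Ts ≠ [] ∧ Vs ≠ [] ∧ (∀ V ∈ Vs, V.length = k) ∧
      Typing Γ t (sumT (Ts.map fun Ti => .unit (allN k (.arrow U Ti)))) ∧
      Typing Γ u (sumT (Vs.map fun Vj => .unit (UTy.msubst Vj U))) ∧
      TPre (sumT ((Ts.map fun Ti => Vs.map fun Vj => Ty.msubst Vj Ti).flatten)) T := by
  exact gen_aux h t u rfl
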